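/- Let g : A → B be a function between finite nonempty sets, ε > 0, and F ⊆ B^A a collection of functions. Then there exist c ≤ 1/ε² functions f₁,...,f_c ∈ F such that for every f ∈ F there is a function Γ_f : B^c → B with Pr_{x∈A}[Γ_f(f₁(x),...,f_c(x)) = f(x)] ≥ Pr_{x∈A}[g(x) = f(x)] − ε. -/

import Mathlib

open Finset

set_option linter.unusedSectionVars false
namespace BL33

variable {A : Type*} [Fintype A] {B : Type*} [Fintype B] [Nonempty B] [DecidableEq B]

section ce
variable {V : Type*} [Fintype V] [DecidableEq V]

/-- conditional expectation of `u` given the fiber of `σ` containing `x`. -/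
noncomputable def ce (σ : A → V) (u : A → ℝ) (x : A) : ℝ :=
  (∑ y ∈ univ.filter fun y => σ y = σ x, u y) / (univ.filter fun y => σ y = σ x).card

lemma cell_card_pos (σ : A → V) (x : A) : 0 < (univ.filter fun y => σ y = σ x).card :=
  card_pos.mpr ⟨x, mem_filter.mpr ⟨mem_univ x, rfl⟩⟩

lemma cell_congr (σ : A → V) {x x' : A} (h : σ x = σ x') :
    (univ.filter fun y => σ y = σ x) = univ.filter fun y => σ y = σ x' := by
  apply filter_congr; intro y _; rw [h]

lemma ce_congr (σ : A → V) (u : A → ℝ) {x x' : A} (h : σ x = σ x') :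
    ce σ u x = ce σ u x' := by
  unfold ce; rw [cell_congr σ h]

lemma ce_nonneg (σ : A → V) {u : A → ℝ} (hu : ∀ x, 0 ≤ u x) (x : A) : 0 ≤ ce σ u x :=
  div_nonneg (sum_nonneg fun y _ => hu y) (Nat.cast_nonneg _)

lemma sum_mul_ce (σ : A → V) (u w : A → ℝ) (hw : ∀ x y, σ x = σ y → w x = w y) :
    ∑ x, ce σ u x * w x = ∑ x, u x * w x := by
  rw [← Finset.sum_fiberwise univ σ (fun x => ce σ u x * w x),
      ← Finset.sum_fiberwise univ σ (fun x => u x * w x)]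
  refine Finset.sum_congr rfl fun v _ => ?_
  rcases (univ.filter fun x => σ x = v).eq_empty_or_nonempty with he | ⟨x₀, hx₀⟩
  · rw [he]; simp
  · have hx₀' : σ x₀ = v := (mem_filter.mp hx₀).2
    have hmem : ∀ x ∈ univ.filter fun x => σ x = v, σ x = σ x₀ := fun x hx => by
      rw [(mem_filter.mp hx).2, hx₀']
    have hcell : ∀ x ∈ univ.filter fun x => σ x = v,
        (univ.filter fun y => σ y = σ x) = univ.filter fun x => σ x = v := fun x hx => by
      apply filter_congr; intro y _; rw [(mem_filter.mp hx).2]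
    have hL : ∑ x ∈ univ.filter fun x => σ x = v, ce σ u x * w x
        = ∑ x ∈ univ.filter fun x => σ x = v,
            ((∑ y ∈ univ.filter fun x => σ x = v, u y) /
              (univ.filter fun x => σ x = v).card) * w x₀ := by
      refine sum_congr rfl fun x hx => ?_
      rw [show ce σ u x = (∑ y ∈ univ.filter fun x => σ x = v, u y) /
            (univ.filter fun x => σ x = v).card by unfold ce; rw [hcell x hx],
          hw x x₀ (hmem x hx)]
    have hR : ∑ x ∈ univ.filter fun x => σ x = v, u x * w x
        = ∑ x ∈ univ.filter fun x => σ x = v, u x * w x₀ := by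
      refine sum_congr rfl fun x hx => by rw [hw x x₀ (hmem x hx)]
    rw [hL, hR, sum_const, ← sum_mul]
    have hn : (0:ℝ) < (univ.filter fun x => σ x = v).card := by
      have := card_pos.mpr ⟨x₀, hx₀⟩
      exact_mod_cast this
    rw [nsmul_eq_mul]
    field_simp

variable (g : A → B)

/-- indicator of `g = b` -/
def ind (b : B) (y : A) : ℝ := if g y = b then 1 else 0

lemma sum_ce_ind (σ : A → V) (x : A) : ∑ b : B, ce σ (ind g b) x = 1 := by
  unfold ce
  rw [← sum_div, Finset.sum_comm]
  have : ∀ y, (∑ b : B, ind g b y) = 1 := fun y => by simp [ind]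
  simp_rw [this]
  rw [sum_const, nsmul_eq_mul, mul_one, div_self]
  exact_mod_cast (cell_card_pos σ x).ne'

lemma ce_ind_nonneg (σ : A → V) (b : B) (x : A) : 0 ≤ ce σ (ind g b) x :=
  ce_nonneg σ (fun y => by unfold ind; positivity) x

lemma ce_ind_le_one (σ : A → V) (b : B) (x : A) : ce σ (ind g b) x ≤ 1 := by
  rw [← sum_ce_ind g σ x]
  exact single_le_sum (fun b _ => ce_ind_nonneg g σ b x) (mem_univ b)

/-- the energy of the partition induced by `σ`, unnormalized (scale `Fintype.card A`). -/
noncomputable def en (σ : A → V) : ℝ := ∑ b : B, ∑ x : A, (ce σ (ind g b) x) ^ 2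

lemma en_nonneg (σ : A → V) : 0 ≤ en g σ :=
  sum_nonneg fun _ _ => sum_nonneg fun _ _ => sq_nonneg _

lemma en_le (σ : A → V) : en g σ ≤ Fintype.card A := by
  unfold en
  rw [Finset.sum_comm]
  calc ∑ x : A, ∑ b : B, (ce σ (ind g b) x) ^ 2
      ≤ ∑ x : A, ∑ b : B, ce σ (ind g b) x := by
        refine sum_le_sum fun x _ => sum_le_sum fun b _ => ?_
        have h0 := ce_ind_nonneg g σ b x
        have h1 := ce_ind_le_one g σ b x
        nlinarith
    _ = ∑ x : A, 1 := by
        refine sum_congr rfl fun x _ => sum_ce_ind g σ x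
    _ = Fintype.card A := by simp

variable {W : Type*} [Fintype W] [DecidableEq W]

lemma pyth (σ : A → V) (τ : A → W) (hr : ∀ x y, τ x = τ y → σ x = σ y) (u : A → ℝ) :
    ∑ x : A, (ce τ u x - ce σ u x) ^ 2
      = (∑ x : A, (ce τ u x) ^ 2) - ∑ x : A, (ce σ u x) ^ 2 := by
  have h1 : ∑ x : A, ce τ u x * ce σ u x = ∑ x : A, u x * ce σ u x :=
    sum_mul_ce τ u _ (fun x y hxy => ce_congr σ u (hr x y hxy))
  have h2 : ∑ x : A, ce σ u x * ce σ u x = ∑ x : A, u x * ce σ u x :=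
    sum_mul_ce σ u _ (fun x y hxy => ce_congr σ u hxy)
  have E1 : ∑ x : A, (ce τ u x - ce σ u x) ^ 2
      = (∑ x : A, (ce τ u x) ^ 2) - 2 * (∑ x : A, ce τ u x * ce σ u x)
        + ∑ x : A, ce σ u x * ce σ u x := by
    rw [mul_sum, ← sum_sub_distrib, ← sum_add_distrib]
    exact sum_congr rfl fun x _ => by ring
  have E2 : ∑ x : A, (ce σ u x) ^ 2 = ∑ x : A, ce σ u x * ce σ u x :=
    sum_congr rfl fun x _ => sq (ce σ u x) ▸ by ring
  rw [E1, E2]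
  linarith

lemma en_congr {V₂ : Type*} [Fintype V₂] [DecidableEq V₂] (σ₁ : A → V) (σ₂ : A → V₂)
    (hiff : ∀ x y, σ₁ x = σ₁ y ↔ σ₂ x = σ₂ y) : en g σ₁ = en g σ₂ := by
  have hce : ∀ u x, ce σ₁ u x = ce σ₂ u x := by
    intro u x
    unfold ce
    have : (univ.filter fun y => σ₁ y = σ₁ x) = univ.filter fun y => σ₂ y = σ₂ x := by
      apply filter_congr; intro y _; exact hiff y x
    rw [this]
  unfold en
  exact sum_congr rfl fun b _ => sum_congr rfl fun x _ => by rw [hce]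

end ce

end BL33

namespace BL33
section step
variable {A : Type*} [Fintype A] [Nonempty A] {B : Type*} [Fintype B] [Nonempty B] [DecidableEq B]
variable {V : Type*} [Fintype V] [DecidableEq V]

lemma indh_meas (σ : A → V) (h : A → B) (b : B) :
    ∀ x y : A, (σ x, h x) = (σ y, h y) → (if h x = b then (1:ℝ) else 0) = (if h y = b then 1 else 0) := by
  intro x y hxy
  have : h x = h y := congrArg Prod.snd hxy
  rw [this]

lemma step (g : A → B) (σ : A → V) (h : A → B) :
    ∃ Γ : V → B,
      (∑ x : A, if g x = h x then (1:ℝ) else 0) ≤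
        (∑ x : A, if Γ (σ x) = h x then (1:ℝ) else 0) +
          Real.sqrt ((Fintype.card A) * (en g (fun x => (σ x, h x)) - en g σ)) := by
  classical
  set σ' : A → V × B := fun x => (σ x, h x) with hσ'
  have hex : ∀ v : V, ∃ b : B, ∀ b' : B,
      (univ.filter fun x => σ x = v ∧ h x = b').card ≤
        (univ.filter fun x => σ x = v ∧ h x = b).card := by
    intro v
    obtain ⟨b, -, hb⟩ := Finset.exists_max_image (univ : Finset B)
      (fun b => (univ.filter fun x => σ x = v ∧ h x = b).card) univ_nonempty
    exact ⟨b, fun b' => hb b' (mem_univ _)⟩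
  choose Γ hΓ using hex
  refine ⟨Γ, ?_⟩
  -- Claim A
  have hA : (∑ x : A, if g x = h x then (1:ℝ) else 0) = ∑ x : A, ce σ' (ind g (h x)) x := by
    have e1 : ∀ x : A, (if g x = h x then (1:ℝ) else 0)
        = ∑ b : B, ind g b x * (if h x = b then (1:ℝ) else 0) := by
      intro x
      rcases eq_or_ne (g x) (h x) with he | he
      · rw [if_pos he, Finset.sum_eq_single (g x)]
        · simp [ind, he]
        · intro b _ hb
          have h0 : ind g b x = 0 := if_neg (fun hg => hb hg.symm)
          rw [h0, zero_mul]
        · simp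
      · rw [if_neg he]
        symm
        refine Finset.sum_eq_zero fun b _ => ?_
        rcases eq_or_ne (g x) b with hb | hb
        · have : h x ≠ b := fun hh => he (hb ▸ hh ▸ rfl)
          simp [this]
        · simp [ind, hb]
    calc (∑ x : A, if g x = h x then (1:ℝ) else 0)
        = ∑ x : A, ∑ b : B, ind g b x * (if h x = b then (1:ℝ) else 0) :=
          sum_congr rfl fun x _ => e1 x
      _ = ∑ b : B, ∑ x : A, ind g b x * (if h x = b then (1:ℝ) else 0) := sum_comm
      _ = ∑ b : B, ∑ x : A, ce σ' (ind g b) x * (if h x = b then (1:ℝ) else 0) :=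
          sum_congr rfl fun b _ => (sum_mul_ce σ' (ind g b) _ (indh_meas σ h b)).symm
      _ = ∑ x : A, ∑ b : B, ce σ' (ind g b) x * (if h x = b then (1:ℝ) else 0) := sum_comm
      _ = ∑ x : A, ce σ' (ind g (h x)) x := by
          refine sum_congr rfl fun x _ => ?_
          rw [Finset.sum_eq_single (h x)]
          · simp
          · intro b _ hb; simp [Ne.symm hb]
          · simp
  -- Claim B
  have hB : (∑ x : A, ce σ (ind g (h x)) x) ≤ ∑ x : A, if Γ (σ x) = h x then (1:ℝ) else 0 := by
    rw [← Finset.sum_fiberwise univ σ (fun x => ce σ (ind g (h x)) x),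
        ← Finset.sum_fiberwise univ σ (fun x => if Γ (σ x) = h x then (1:ℝ) else 0)]
    refine sum_le_sum fun v _ => ?_
    rcases (univ.filter fun x => σ x = v).eq_empty_or_nonempty with he | ⟨x₀, hx₀⟩
    · rw [he]; simp
    · have hx₀' : σ x₀ = v := (mem_filter.mp hx₀).2
      -- left side
      have hLa : ∀ x ∈ univ.filter fun x => σ x = v,
          ce σ (ind g (h x)) x = ce σ (ind g (h x)) x₀ := fun x hx =>
        ce_congr σ _ (by rw [(mem_filter.mp hx).2, hx₀'])
      have hL : ∑ x ∈ univ.filter fun x => σ x = v, ce σ (ind g (h x)) x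
          = ∑ b : B, ((univ.filter fun x => σ x = v ∧ h x = b).card : ℝ) * ce σ (ind g b) x₀ := by
        rw [sum_congr rfl hLa, ← Finset.sum_fiberwise (univ.filter fun x => σ x = v) h
            (fun x => ce σ (ind g (h x)) x₀)]
        refine sum_congr rfl fun b _ => ?_
        rw [filter_filter]
        rw [sum_congr rfl (fun x hx => by rw [(mem_filter.mp hx).2.2])]
        rw [sum_const, nsmul_eq_mul]
      have hR : ∑ x ∈ univ.filter fun x => σ x = v, (if Γ (σ x) = h x then (1:ℝ) else 0)
          = ((univ.filter fun x => σ x = v ∧ h x = Γ v).card : ℝ) := by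
        rw [sum_congr rfl (fun x hx => by rw [(mem_filter.mp hx).2])]
        rw [Finset.sum_boole, filter_filter]
        congr 2
        apply filter_congr
        intro x _
        constructor
        · rintro ⟨h1, h2⟩; exact ⟨h1, h2.symm⟩
        · rintro ⟨h1, h2⟩; exact ⟨h1, h2.symm⟩
      rw [hL, hR]
      calc ∑ b : B, ((univ.filter fun x => σ x = v ∧ h x = b).card : ℝ) * ce σ (ind g b) x₀
          ≤ ∑ b : B, ((univ.filter fun x => σ x = v ∧ h x = Γ v).card : ℝ) * ce σ (ind g b) x₀ := by
            refine sum_le_sum fun b _ => ?_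
            exact mul_le_mul_of_nonneg_right (by exact_mod_cast hΓ v b) (ce_ind_nonneg g σ b x₀)
        _ = ((univ.filter fun x => σ x = v ∧ h x = Γ v).card : ℝ) := by
            rw [← mul_sum, sum_ce_ind g σ x₀, mul_one]
  -- Claim C
  have hC : (∑ x : A, ce σ' (ind g (h x)) x) - (∑ x : A, ce σ (ind g (h x)) x)
      ≤ Real.sqrt ((Fintype.card A) * (en g σ' - en g σ)) := by
    set d : A → ℝ := fun x => ce σ' (ind g (h x)) x - ce σ (ind g (h x)) x with hd
    have h4 : ∑ x : A, d x ^ 2 ≤ en g σ' - en g σ := by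
      calc ∑ x : A, d x ^ 2
          ≤ ∑ x : A, ∑ b : B, (ce σ' (ind g b) x - ce σ (ind g b) x) ^ 2 := by
            refine sum_le_sum fun x _ => ?_
            have := single_le_sum
              (f := fun b => (ce σ' (ind g b) x - ce σ (ind g b) x) ^ 2)
              (fun b _ => sq_nonneg _) (mem_univ (h x))
            simpa [hd] using this
        _ = ∑ b : B, ∑ x : A, (ce σ' (ind g b) x - ce σ (ind g b) x) ^ 2 := sum_comm
        _ = ∑ b : B, ((∑ x : A, (ce σ' (ind g b) x) ^ 2) - ∑ x : A, (ce σ (ind g b) x) ^ 2) :=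
            sum_congr rfl fun b _ =>
              pyth σ σ' (fun x y hxy => congrArg Prod.fst hxy) (ind g b)
        _ = en g σ' - en g σ := by rw [sum_sub_distrib]; rfl
    have hpy : ∑ b : B, ∑ x : A, (ce σ' (ind g b) x - ce σ (ind g b) x) ^ 2
        = en g σ' - en g σ := by
      rw [sum_congr rfl fun b _ =>
        pyth σ σ' (fun (x y : A) hxy => congrArg Prod.fst hxy) (ind g b), sum_sub_distrib]
      rfl
    have hΔ : 0 ≤ en g σ' - en g σ := by
      rw [← hpy]; positivity
    have habs : ∑ x : A, d x ≤ ∑ x : A, |d x| := sum_le_sum fun x _ => le_abs_self _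
    have h3 : (∑ x : A, |d x|) ^ 2 ≤ (Fintype.card A) * ∑ x : A, d x ^ 2 := by
      have := sq_sum_le_card_mul_sum_sq (s := (univ : Finset A)) (f := fun x => |d x|)
      simpa [sq_abs] using this
    have h5 : (∑ x : A, |d x|) ≤ Real.sqrt ((Fintype.card A) * (en g σ' - en g σ)) := by
      rw [Real.le_sqrt (sum_nonneg fun x _ => abs_nonneg _) (by positivity)]
      calc (∑ x : A, |d x|) ^ 2 ≤ (Fintype.card A) * ∑ x : A, d x ^ 2 := h3
        _ ≤ (Fintype.card A) * (en g σ' - en g σ) :=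
            mul_le_mul_of_nonneg_left h4 (Nat.cast_nonneg _)
    have h6 : (∑ x : A, ce σ' (ind g (h x)) x) - (∑ x : A, ce σ (ind g (h x)) x)
        = ∑ x : A, d x := (sum_sub_distrib _ _).symm
    linarith [habs, h5, h6]
  linarith [hA, hB, hC]

end step
end BL33

namespace BL33
section main
variable {A : Type*} [Fintype A] [Nonempty A] {B : Type*} [Fintype B] [Nonempty B] [DecidableEq B]

lemma en_snoc (g : A → B) {c : ℕ} (f : Fin c → (A → B)) (h : A → B) :
    en g (fun x (i : Fin (c+1)) => Fin.snoc (α := fun _ => A → B) f h i x)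
      = en g (fun x => ((fun i => f i x : Fin c → B), h x)) := by
  apply en_congr
  intro x y
  constructor
  · intro hxy
    have hc : ∀ i : Fin c, f i x = f i y := by
      intro i
      have := congrFun hxy (Fin.castSucc i)
      simpa [Fin.snoc_castSucc] using this
    have hl : h x = h y := by
      have := congrFun hxy (Fin.last c)
      simpa [Fin.snoc_last] using this
    exact Prod.ext (funext hc) hl
  · intro hxy
    have hc : ∀ i : Fin c, f i x = f i y := fun i => congrFun (congrArg Prod.fst hxy) i
    have hl : h x = h y := congrArg Prod.snd hxy
    funext i
    refine Fin.lastCases ?_ ?_ i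
    · simpa [Fin.snoc_last] using hl
    · intro j; simpa [Fin.snoc_castSucc] using hc j

end main
end BL33

open Finset BL33

/-- Low complexity approximation (Bhowmick–Lovett, Corollary 3.3): for any
`g : A → B`, `ε > 0` and any collection `F` of functions `A → B`, there are
`c ≤ 1/ε²` functions `f₁,…,f_c ∈ F` such that every `f ∈ F` admits
`Γ_f : B^c → B` with
`Pr_x[Γ_f(f₁(x),…,f_c(x)) = f(x)] ≥ Pr_x[g(x) = f(x)] − ε`. -/
theorem stmt5 {A B : Type*} [Fintype A] [Nonempty A] [Fintype B] [Nonempty B]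
    [DecidableEq B] (g : A → B) (ε : ℝ) (hε : 0 < ε) (F : Set (A → B)) :
    ∃ c : ℕ, (c : ℝ) ≤ 1 / ε ^ 2 ∧
      ∃ f : Fin c → (A → B), (∀ i, f i ∈ F) ∧
        ∀ h ∈ F, ∃ Γ : (Fin c → B) → B,
          ((Finset.univ.filter fun x : A => Γ (fun i => f i x) = h x).card : ℝ) /
              Fintype.card A ≥
            ((Finset.univ.filter fun x : A => g x = h x).card : ℝ) / Fintype.card A - ε := by
  classical
  have hn0 : (0:ℝ) < (Fintype.card A : ℝ) := by exact_mod_cast Fintype.card_pos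
  have Q : ∀ k : ℕ, ∃ c : ℕ, ∃ f : Fin c → (A → B), (∀ i, f i ∈ F) ∧
      (c : ℝ) * (ε ^ 2 * (Fintype.card A : ℝ)) ≤ en g (fun x (i : Fin c) => f i x) ∧
      ((∀ h ∈ F, ∃ Γ : (Fin c → B) → B,
          ((Finset.univ.filter fun x : A => Γ (fun i => f i x) = h x).card : ℝ) /
              Fintype.card A ≥
            ((Finset.univ.filter fun x : A => g x = h x).card : ℝ) / Fintype.card A - ε)
        ∨ k ≤ c) := by
    intro k
    induction k with
    | zero =>
      refine ⟨0, (Fin.elim0 : Fin 0 → (A → B)), fun i => i.elim0, ?_, Or.inr (Nat.zero_le _)⟩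
      simpa using en_nonneg g (fun x (i : Fin 0) => (Fin.elim0 : Fin 0 → (A → B)) i x)
    | succ k ih =>
      obtain ⟨c, f, hf, hen, hd⟩ := ih
      by_cases hg : (∀ h ∈ F, ∃ Γ : (Fin c → B) → B,
          ((Finset.univ.filter fun x : A => Γ (fun i => f i x) = h x).card : ℝ) /
              Fintype.card A ≥
            ((Finset.univ.filter fun x : A => g x = h x).card : ℝ) / Fintype.card A - ε)
      · exact ⟨c, f, hf, hen, Or.inl hg⟩
      · have hg' := hg
        push_neg at hg
        obtain ⟨h, hhF, hΓbad⟩ := hg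
        obtain ⟨Γ, hΓ⟩ := step g (fun x (i : Fin c) => f i x) h
        have hbad := hΓbad Γ
        have e1 : ((Finset.univ.filter fun x : A => g x = h x).card : ℝ)
            = ∑ x : A, if g x = h x then (1:ℝ) else 0 := (Finset.sum_boole _ _).symm
        have e2 : ((Finset.univ.filter fun x : A => Γ (fun i => f i x) = h x).card : ℝ)
            = ∑ x : A, if Γ (fun i => f i x) = h x then (1:ℝ) else 0 :=
          (Finset.sum_boole _ _).symm
        have hbad2 : ((Finset.univ.filter fun x : A => Γ (fun i => f i x) = h x).card : ℝ)
            < ((Finset.univ.filter fun x : A => g x = h x).card : ℝ)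
              - ε * (Fintype.card A : ℝ) := by
          have hm := mul_lt_mul_of_pos_right hbad hn0
          rw [div_mul_cancel₀ _ hn0.ne', sub_mul, div_mul_cancel₀ _ hn0.ne'] at hm
          exact hm
        have hgap : ε * (Fintype.card A : ℝ) <
            (∑ x : A, if g x = h x then (1:ℝ) else 0)
              - ∑ x : A, if Γ (fun i => f i x) = h x then (1:ℝ) else 0 := by
          rw [← e1, ← e2]; linarith
        set Δ : ℝ := en g (fun x => ((fun i => f i x : Fin c → B), h x))
          - en g (fun x (i : Fin c) => f i x) with hΔdef
        have hsq : ε * (Fintype.card A : ℝ) < Real.sqrt ((Fintype.card A : ℝ) * Δ) := by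
          calc ε * (Fintype.card A : ℝ)
              < (∑ x : A, if g x = h x then (1:ℝ) else 0)
                - ∑ x : A, if Γ (fun i => f i x) = h x then (1:ℝ) else 0 := hgap
            _ ≤ Real.sqrt ((Fintype.card A : ℝ) * Δ) := by
                rw [hΔdef]; linarith [hΓ]
        have hΔ : ε ^ 2 * (Fintype.card A : ℝ) ≤ Δ := by
          have h0 : 0 ≤ ε * (Fintype.card A : ℝ) := by positivity
          have := (Real.lt_sqrt h0).mp hsq
          nlinarith [hn0]
        refine ⟨c + 1, Fin.snoc f h, ?_, ?_, Or.inr ?_⟩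
        · intro i
          refine Fin.lastCases ?_ ?_ i
          · rw [Fin.snoc_last]; exact hhF
          · intro j; rw [Fin.snoc_castSucc]; exact hf j
        · rw [en_snoc g f h]
          push_cast
          have := hen
          rw [hΔdef] at hΔ
          linarith
        · rcases hd with hgoal | hk
          · exact absurd hgoal hg'
          · exact Nat.succ_le_succ hk
  obtain ⟨c, f, hf, hen, hd⟩ := Q (⌊1 / ε ^ 2⌋₊ + 1)
  have hle : en g (fun x (i : Fin c) => f i x) ≤ (Fintype.card A : ℝ) := en_le g _
  have hc : (c : ℝ) ≤ 1 / ε ^ 2 := by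
    rw [le_div_iff₀ (by positivity : (0:ℝ) < ε ^ 2)]
    nlinarith [hen.trans hle, hn0]
  refine ⟨c, hc, f, hf, ?_⟩
  rcases hd with hgoal | hk
  · exact hgoal
  · exfalso
    have h1 : (1:ℝ) / ε ^ 2 < (⌊1 / ε ^ 2⌋₊ : ℝ) + 1 := Nat.lt_floor_add_one _
    have h2 : ((⌊1 / ε ^ 2⌋₊ + 1 : ℕ) : ℝ) ≤ (c : ℝ) := by exact_mod_cast hk
    push_cast at h2
    linarith
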